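/- Let f : ℝ^{D−d} × ℝ^d × ℝ → ℝ^{D−d}, g : ℝ^{D−d} × ℝ^d × ℝ → ℝ^d, let S : ℝ^{D−d} × ℝ^d → ℝ be a bilinear map and let φ : ℝ^{D−d} × ℝ^d → ℝ be such that S(f(q,p,t), p) + S(q, g(q,p,t)) = φ(q,p) for all q, p, t. Assume the PRK coefficients satisfy b_i = B_i for all i, b_i A_{ij} + B_j a_{ji} − b_i B_j = 0 for all i, j, and c_i = C_i for all i. Let t₀ < t₁ < … < t_N with h_n = t_{n+1} − t_n, and suppose q_n ∈ ℝ^{D−d}, p_n ∈ ℝ^d, stages Q_{n,i}, P_{n,i} and slopes k_{n,i} = f(Q_{n,i}, P_{n,i}, t_n + c_i h_n), ℓ_{n,i} = g(Q_{n,i}, P_{n,i}, t_n + C_i h_n) satisfy q_{n+1} = q_n + h_n Σ_{i=1}^s b_i k_{n,i}, p_{n+1} = p_n + h_n Σ_{i=1}^s B_i ℓ_{n,i}, Q_{n,i} = q_n + h_n Σ_{j=1}^s a_{ij} k_{n,j}, P_{n,i} = p_n + h_n Σ_{j=1}^s A_{ij} ℓ_{n,j}. Then S(q_N, p_N) − S(q₀,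 p₀) = Σ_{n=0}^{N−1} h_n Σ_{i=1}^s b_i φ(Q_{n,i}, P_{n,i}). -/

import Mathlib

open Matrix BigOperators

lemma prk_step {M V : Type*} [AddCommGroup M] [Module ℝ M] [AddCommGroup V] [Module ℝ V]
    (S : M →ₗ[ℝ] V →ₗ[ℝ] ℝ) (s : ℕ) (a A : Fin s → Fin s → ℝ) (b B : Fin s → ℝ)
    (hbB : ∀ i, b i = B i) (hsymp : ∀ i j, b i * A i j + B j * a j i - b i * B j = 0)
    (h : ℝ) (q : M) (p : V) (Q k : Fin s → M) (P l : Fin s → V)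
    (hQ : ∀ i, Q i = q + h • ∑ j, a i j • k j)
    (hP : ∀ i, P i = p + h • ∑ j, A i j • l j)
    (φv : Fin s → ℝ)
    (hφ : ∀ i, S (k i) (P i) + S (Q i) (l i) = φv i) :
    S (q + h • ∑ i, b i • k i) (p + h • ∑ i, B i • l i) - S q p
      = h * ∑ i, b i * φv i := by
  have T : Fin s → Fin s → ℝ := fun i j => S (k i) (l j)
  have e1 : ∀ i, φv i =
      S (k i) p + h * ∑ j, A i j * S (k i) (l j)
      + (S q (l i) + h * ∑ j, a i j * S (k j) (l i)) := by
    intro i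
    rw [← hφ i, hP i, hQ i]
    simp [_root_.map_add, _root_.map_smul, _root_.map_sum, LinearMap.sum_apply, LinearMap.add_apply,
      LinearMap.smul_apply, smul_eq_mul]
  have e2 : S (q + h • ∑ i, b i • k i) (p + h • ∑ i, B i • l i) - S q p
      = h * (∑ i, B i * S q (l i)) + h * (∑ i, b i * S (k i) p)
        + h * h * ∑ i, b i * ∑ j, B j * S (k i) (l j) := by
    simp [_root_.map_add, _root_.map_smul, _root_.map_sum, LinearMap.sum_apply, LinearMap.add_apply,
      LinearMap.smul_apply, smul_eq_mul, Finset.mul_sum]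
    ring_nf
    rw [Finset.sum_add_distrib, add_assoc]
    congr 1
    rw [Finset.sum_comm]
    congr 1
    exact Finset.sum_congr rfl fun x _ => by
      rw [Finset.mul_sum]
      exact Finset.sum_congr rfl fun y _ => by ring
  rw [e2]
  simp only [e1, hbB, mul_add, add_mul, Finset.mul_sum, Finset.sum_add_distrib]
  ring_nf
  have swap : (∑ x : Fin s, ∑ x1 : Fin s, h * B x * h * a x x1 * S (k x1) (l x))
      = ∑ x : Fin s, ∑ x1 : Fin s, h * B x1 * h * a x1 x * S (k x) (l x1) :=
    Finset.sum_comm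
  have key : (∑ x : Fin s, ∑ x1 : Fin s, h ^ 2 * B x * B x1 * S (k x) (l x1))
      = (∑ x : Fin s, ∑ x1 : Fin s, h * B x * h * A x x1 * S (k x) (l x1))
        + ∑ x : Fin s, ∑ x1 : Fin s, h * B x * h * a x x1 * S (k x1) (l x) := by
    rw [swap, ← Finset.sum_add_distrib]
    refine Finset.sum_congr rfl fun x _ => ?_
    rw [← Finset.sum_add_distrib]
    refine Finset.sum_congr rfl fun y _ => ?_
    have e := hsymp x y
    rw [hbB x] at e
    linear_combination (-(h ^ 2) * (S (k x)) (l y)) * e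
  rw [key]
  ring

/-- Theorem 5.2 (generalised conservation for symplectic PRK schemes): if
`(d/dt) S(q,p) = φ(q,p)` along solutions of the partitioned system, a symplectic
PRK scheme reproduces the law exactly, with the time integral of `φ` replaced by
the quadrature based on the weights and the internal stages. -/
theorem stmt_17 (D d s N : ℕ)
    (f : (Fin (D - d) → ℝ) → (Fin d → ℝ) → ℝ → (Fin (D - d) → ℝ))
    (g : (Fin (D - d) → ℝ) → (Fin d → ℝ) → ℝ → (Fin d → ℝ))
    (S : (Fin (D - d) → ℝ) →ₗ[ℝ] (Fin d → ℝ) →ₗ[ℝ] ℝ)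
    (φ : (Fin (D - d) → ℝ) → (Fin d → ℝ) → ℝ)
    (hS : ∀ q p t, S (f q p t) p + S q (g q p t) = φ q p)
    (a A : Fin s → Fin s → ℝ) (b B c C : Fin s → ℝ)
    (hbB : ∀ i, b i = B i)
    (hsymp : ∀ i j, b i * A i j + B j * a j i - b i * B j = 0)
    (hcC : ∀ i, c i = C i)
    (t : Fin (N + 1) → ℝ) (ht : StrictMono t)
    (q : Fin (N + 1) → Fin (D - d) → ℝ) (p : Fin (N + 1) → Fin d → ℝ)
    (Q k : Fin N → Fin s → Fin (D - d) → ℝ) (P l : Fin N → Fin s → Fin d → ℝ)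
    (hk : ∀ (n : Fin N) (i : Fin s),
      k n i = f (Q n i) (P n i) (t n.castSucc + c i * (t n.succ - t n.castSucc)))
    (hl : ∀ (n : Fin N) (i : Fin s),
      l n i = g (Q n i) (P n i) (t n.castSucc + C i * (t n.succ - t n.castSucc)))
    (hqstep : ∀ n : Fin N,
      q n.succ = q n.castSucc + (t n.succ - t n.castSucc) • ∑ i, b i • k n i)
    (hpstep : ∀ n : Fin N,
      p n.succ = p n.castSucc + (t n.succ - t n.castSucc) • ∑ i, B i • l n i)
    (hQ : ∀ (n : Fin N) (i : Fin s),
      Q n i = q n.castSucc + (t n.succ - t n.castSucc) • ∑ j, a i j • k n j)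
    (hP : ∀ (n : Fin N) (i : Fin s),
      P n i = p n.castSucc + (t n.succ - t n.castSucc) • ∑ j, A i j • l n j) :
    S (q (Fin.last N)) (p (Fin.last N)) - S (q 0) (p 0) =
      ∑ n : Fin N, (t n.succ - t n.castSucc) * ∑ i, b i * φ (Q n i) (P n i) := by

  have key : ∀ n : Fin N,
      S (q n.succ) (p n.succ) - S (q n.castSucc) (p n.castSucc)
        = (t n.succ - t n.castSucc) * ∑ i, b i * φ (Q n i) (P n i) := by
    intro n
    rw [hqstep n, hpstep n]
    exact prk_step S s a A b B hbB hsymp _ _ _ _ _ _ _ (hQ n) (hP n) _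
      (fun i => by rw [hk, hl, hcC]; exact hS _ _ _)
  open Fin.NatCast in
  have tele : ∑ n : Fin N,
      (S (q n.succ) (p n.succ) - S (q n.castSucc) (p n.castSucc))
        = S (q (Fin.last N)) (p (Fin.last N)) - S (q 0) (p 0) := by
    set F : ℕ → ℝ := fun m => S (q m) (p m) with hF
    have h1 : ∀ n : Fin N, S (q n.succ) (p n.succ) - S (q n.castSucc) (p n.castSucc)
        = F ((n : ℕ) + 1) - F (n : ℕ) := by
      intro n
      have e1 : (((n : ℕ) + 1 : ℕ) : Fin (N + 1)) = n.succ := by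
        ext; simp [Fin.val_natCast, Nat.mod_eq_of_lt (by omega : (n : ℕ) + 1 < N + 1)]
      have e2 : (((n : ℕ) : ℕ) : Fin (N + 1)) = n.castSucc := by
        ext; simp [Fin.val_natCast, Nat.mod_eq_of_lt (by omega : (n : ℕ) < N + 1)]
      simp only [hF, e1, e2]
    have e3 : ((N : ℕ) : Fin (N + 1)) = Fin.last N := by
      ext; simp [Fin.val_natCast]
    have e4 : ((0 : ℕ) : Fin (N + 1)) = 0 := by simp
    calc ∑ n : Fin N, (S (q n.succ) (p n.succ) - S (q n.castSucc) (p n.castSucc))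
        = ∑ n : Fin N, (F ((n : ℕ) + 1) - F (n : ℕ)) := Finset.sum_congr rfl fun n _ => h1 n
      _ = ∑ n ∈ Finset.range N, (F (n + 1) - F n) :=
          Fin.sum_univ_eq_sum_range (fun m => F (m + 1) - F m) N
      _ = F N - F 0 := Finset.sum_range_sub F N
      _ = S (q (Fin.last N)) (p (Fin.last N)) - S (q 0) (p 0) := by
          simp only [hF, e3, e4]
  rw [← tele]
  exact Finset.sum_congr rfl fun n _ => key n
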